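/- For all natural numbers n, k and every sequence ρ = (ρ_1,…,ρ_k) with 1 ≤ ρ_ℓ ≤ n ≤ k for all ℓ and Σ_{ℓ=1}^k ρ_ℓ = n², there exists a ρ-latin square of order n, i.e., an n×n array on symbols [k] such that each symbol occurs at most once in each row, at most once in each column, and symbol ℓ occurs exactly ρ_ℓ times. -/

import Mathlib

open Finset

/-- `L` is a (partial) latin array: each symbol occurs at most once in each
row and at most once in each column. -/
def latinArr {r s k : ℕ} (L : Fin r → Fin s → Fin k) : Prop :=
  (∀ i, Function.Injective (L i)) ∧ (∀ j, Function.Injective (fun i => L i j))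

/-- Number of occurrences of symbol `ℓ` in `L`. -/
def symCount {r s k : ℕ} (L : Fin r → Fin s → Fin k) (ℓ : Fin k) : ℕ :=
  ((univ : Finset (Fin r × Fin s)).filter (fun p => L p.1 p.2 = ℓ)).card

/-- `μ_I(ℓ)`: number of rows in `I` in which symbol `ℓ` is missing. -/
def muRows {r s k : ℕ} (L : Fin r → Fin s → Fin k) (I : Finset (Fin r)) (ℓ : Fin k) : ℕ :=
  (I.filter (fun i => ∀ j, L i j ≠ ℓ)).card

/-- `μ_J(ℓ)`: number of columns in `J` in which symbol `ℓ` is missing. -/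
def muCols {r s k : ℕ} (L : Fin r → Fin s → Fin k) (J : Finset (Fin s)) (ℓ : Fin k) : ℕ :=
  (J.filter (fun j => ∀ i, L i j ≠ ℓ)).card

/-- `μ_K(i)` for a row `i`: number of symbols of `K` missing in row `i`. -/
def muSymRow {r s k : ℕ} (L : Fin r → Fin s → Fin k) (K : Finset (Fin k)) (i : Fin r) : ℕ :=
  (K.filter (fun ℓ => ∀ j, L i j ≠ ℓ)).card

/-- `μ_K(j)` for a column `j`: number of symbols of `K` missing in column `j`. -/
def muSymCol {r s k : ℕ} (L : Fin r → Fin s → Fin k) (K : Finset (Fin k)) (j : Fin s) : ℕ :=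
  (K.filter (fun ℓ => ∀ i, L i j ≠ ℓ)).card

/-- `S` is an `n × n` `ρ`-latin square. -/
def rhoLatinSquare {n k : ℕ} (ρ : Fin k → ℕ) (S : Fin n → Fin n → Fin k) : Prop :=
  latinArr S ∧ ∀ ℓ, symCount S ℓ = ρ ℓ

/-- `S` extends `L` on the top-left `r × s` corner. -/
def extends' {r s n k : ℕ} (hr : r ≤ n) (hs : s ≤ n)
    (L : Fin r → Fin s → Fin k) (S : Fin n → Fin n → Fin k) : Prop :=
  ∀ i j, S (Fin.castLE hr i) (Fin.castLE hs j) = L i j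


namespace RhoAux

/-- Prefix sums of a multiplicity function. -/
def PS (f : ℕ → ℕ) (t : ℕ) : ℕ := ∑ m ∈ Finset.range t, f m

lemma PS_mono (f : ℕ → ℕ) : Monotone (PS f) := fun a b h =>
  Finset.sum_le_sum_of_subset (Finset.range_subset_range.2 h)

lemma PS_succ (f : ℕ → ℕ) (t : ℕ) : PS f (t + 1) = PS f t + f t :=
  Finset.sum_range_succ f t

/-- Index of the block containing position `p`. -/
noncomputable def gIdx (f : ℕ → ℕ) (p : ℕ) : ℕ := sInf {t | p < PS f (t + 1)}

lemma lt_PS_gIdx {f : ℕ → ℕ} {k p : ℕ} (hp : p < PS f k) : p < PS f (gIdx f p + 1) :=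
  Nat.sInf_mem (⟨k, hp.trans_le (PS_mono f (Nat.le_succ k))⟩ : {t | p < PS f (t + 1)}.Nonempty)

lemma PS_gIdx_le {f : ℕ → ℕ} {p : ℕ} : PS f (gIdx f p) ≤ p := by
  by_contra h
  push_neg at h
  have h0 : gIdx f p ≠ 0 := by
    intro h0
    rw [h0] at h
    simp [PS] at h
  have h1 : gIdx f p ≤ gIdx f p - 1 := by
    apply Nat.sInf_le
    show p < PS f (gIdx f p - 1 + 1)
    have he : gIdx f p - 1 + 1 = gIdx f p := by omega
    rw [he]
    exact h
  omega

lemma gIdx_lt {f : ℕ → ℕ} {k p : ℕ} (hp : p < PS f k) : gIdx f p < k := by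
  by_contra h
  push_neg at h
  have h1 : PS f k ≤ PS f (gIdx f p) := PS_mono f h
  have h2 : PS f (gIdx f p) ≤ p := PS_gIdx_le
  omega

lemma gIdx_eq {f : ℕ → ℕ} {p ℓ : ℕ} (h1 : PS f ℓ ≤ p) (h2 : p < PS f (ℓ + 1)) :
    gIdx f p = ℓ := by
  have hle : gIdx f p ≤ ℓ := Nat.sInf_le h2
  have h3 : p < PS f (gIdx f p + 1) := lt_PS_gIdx h2
  rcases Nat.lt_or_ge (gIdx f p) ℓ with h | h
  · have : PS f (gIdx f p + 1) ≤ PS f ℓ := PS_mono f h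
    omega
  · omega

lemma count_gIdx {f : ℕ → ℕ} {k ℓ : ℕ} (hℓ : ℓ < k) :
    ((Finset.range (PS f k)).filter (fun p => gIdx f p = ℓ)).card = f ℓ := by
  have hset : (Finset.range (PS f k)).filter (fun p => gIdx f p = ℓ)
      = Finset.Ico (PS f ℓ) (PS f (ℓ + 1)) := by
    ext p
    simp only [Finset.mem_filter, Finset.mem_range, Finset.mem_Ico]
    constructor
    · rintro ⟨hp, rfl⟩
      exact ⟨PS_gIdx_le, lt_PS_gIdx hp⟩
    · rintro ⟨h1, h2⟩
      have hk : PS f (ℓ + 1) ≤ PS f k := PS_mono f (by omega)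
      exact ⟨by omega, gIdx_eq h1 h2⟩
  rw [hset, Nat.card_Ico, PS_succ]
  omega

lemma posIdx_lt {n i j : ℕ} (hi : i < n) (hj : j < n) :
    ((j + n - i) % n) * n + i < n ^ 2 := by
  have hn : 0 < n := by omega
  have hd : (j + n - i) % n < n := Nat.mod_lt _ hn
  have h3 : ((j + n - i) % n + 1) * n ≤ n * n := Nat.mul_le_mul hd le_rfl
  have h4 : ((j + n - i) % n + 1) * n = ((j + n - i) % n) * n + n := by ring
  have h5 : n ^ 2 = n * n := by ring
  omega

lemma posIdx_mod {n i : ℕ} (hi : i < n) (d : ℕ) : (d * n + i) % n = i := by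
  rw [Nat.mul_comm, Nat.mul_add_mod, Nat.mod_eq_of_lt hi]

lemma posIdx_div {n i : ℕ} (hn : 0 < n) (hi : i < n) (d : ℕ) : (d * n + i) / n = d := by
  rw [Nat.add_comm, Nat.add_mul_div_right _ _ hn, Nat.div_eq_of_lt hi, Nat.zero_add]

lemma col_eq {n i j : ℕ} (hi : i < n) (hj : j < n) :
    (i + (j + n - i) % n) % n = j := by
  have hn : 0 < n := by omega
  rcases Nat.lt_or_ge (j + n - i) n with h | h
  · rw [Nat.mod_eq_of_lt h]
    have h2 : i + (j + n - i) = j + n := by omega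
    rw [h2, Nat.add_mod_right, Nat.mod_eq_of_lt hj]
  · have h2 : (j + n - i) % n = j + n - i - n := by
      rw [Nat.mod_eq_sub_mod h, Nat.mod_eq_of_lt (by omega)]
    rw [h2]
    have h3 : i + (j + n - i - n) = j := by omega
    rw [h3, Nat.mod_eq_of_lt hj]

lemma pos_cellOf {n p : ℕ} (hn : 0 < n) (hp : p < n ^ 2) :
    (((p % n + p / n) % n + n - p % n) % n) * n + p % n = p := by
  have hq : p / n < n := by
    rw [Nat.div_lt_iff_lt_mul hn]
    rw [pow_two] at hp
    exact hp
  have hr : p % n < n := Nat.mod_lt _ hn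
  have hdm : n * (p / n) + p % n = p := Nat.div_add_mod p n
  have key : ((p % n + p / n) % n + n - p % n) % n = p / n := by
    rcases Nat.lt_or_ge (p % n + p / n) n with h | h
    · rw [Nat.mod_eq_of_lt h]
      have h2 : p % n + p / n + n - p % n = p / n + n := by
        rw [Nat.add_assoc, Nat.add_sub_cancel_left]
      rw [h2, Nat.add_mod_right, Nat.mod_eq_of_lt hq]
    · have h2 : (p % n + p / n) % n = p % n + p / n - n := by
        rw [Nat.mod_eq_sub_mod h, Nat.mod_eq_of_lt (by omega)]
      rw [h2]
      have h3 : p % n + p / n - n + n - p % n = p / n := by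
        rw [Nat.sub_add_cancel h, Nat.add_comm, Nat.add_sub_cancel]
      rw [h3, Nat.mod_eq_of_lt hq]
  rw [key]
  have : (p / n) * n = n * (p / n) := Nat.mul_comm _ _
  omega

/-- Two distinct positions within a block of size `F ≤ n` lie in distinct rows. -/
lemma rows_ne {n B F p p' : ℕ} (hn : 0 < n) (hF : F ≤ n)
    (h1 : B ≤ p) (h2 : p < B + F) (h1' : B ≤ p') (h2' : p' < B + F)
    (hne : p ≠ p') : p % n ≠ p' % n := by
  intro h
  have e1 : n * (p / n) + p % n = p := Nat.div_add_mod p n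
  have e1' : n * (p' / n) + p' % n = p' := Nat.div_add_mod p' n
  rcases Nat.lt_trichotomy (p / n) (p' / n) with hq | hq | hq
  · have h3 : n * (p / n + 1) ≤ n * (p' / n) := Nat.mul_le_mul le_rfl hq
    rw [Nat.mul_add, Nat.mul_one] at h3
    omega
  · rw [hq] at e1
    omega
  · have h3 : n * (p' / n + 1) ≤ n * (p / n) := Nat.mul_le_mul le_rfl hq
    rw [Nat.mul_add, Nat.mul_one] at h3
    omega

lemma cols_ne_aux {n B F p p' : ℕ} (hn : 0 < n) (hF : F ≤ n) (halign : F = n → n ∣ B)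
    (h1 : B ≤ p) (h2 : p < B + F) (h1' : B ≤ p') (h2' : p' < B + F)
    (hrne : p % n ≠ p' % n) (hlt : p < p') :
    (p % n + p / n) % n ≠ (p' % n + p' / n) % n := by
  intro hc
  have hr : p % n < n := Nat.mod_lt _ hn
  have hr' : p' % n < n := Nat.mod_lt _ hn
  have e1 : n * (p / n) + p % n = p := Nat.div_add_mod p n
  have e1' : n * (p' / n) + p' % n = p' := Nat.div_add_mod p' n
  -- q ≤ q'
  have hq_le : p / n ≤ p' / n := by
    by_contra h
    push_neg at h
    have h3 : n * (p' / n + 1) ≤ n * (p / n) := Nat.mul_le_mul le_rfl h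
    rw [Nat.mul_add, Nat.mul_one] at h3
    omega
  -- q' ≤ q + 1
  have hq_le' : p' / n ≤ p / n + 1 := by
    by_contra h
    push_neg at h
    have h3 : n * (p / n + 2) ≤ n * (p' / n) := Nat.mul_le_mul le_rfl h
    rw [Nat.mul_add] at h3
    have h4 : n * 2 = n + n := by ring
    omega
  rcases Nat.eq_or_lt_of_le hq_le with hq | hq
  · -- same diagonal: remainders must be equal, contradiction
    rw [← hq] at hc
    have h4 : p % n ≡ p' % n [MOD n] := Nat.ModEq.add_right_cancel' (p / n) hc
    have h5 : p % n % n = p' % n % n := h4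
    rw [Nat.mod_eq_of_lt hr, Nat.mod_eq_of_lt hr'] at h5
    exact hrne h5
  · -- q' = q + 1
    have hq1 : p' / n = p / n + 1 := by omega
    rw [hq1] at hc e1'
    rw [Nat.mul_add, Nat.mul_one] at e1'
    -- hc : (p % n + p / n) % n = (p' % n + (p / n + 1)) % n
    have h4 : p % n ≡ p' % n + 1 [MOD n] := by
      have : (p % n) + p / n ≡ (p' % n + 1) + p / n [MOD n] := by
        have h5 : p' % n + (p / n + 1) = (p' % n + 1) + p / n := by ring
        rw [h5] at hc
        exact hc
      exact Nat.ModEq.add_right_cancel' (p / n) this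
    rcases Nat.lt_or_ge (p' % n + 1) n with h | h
    · -- p % n = p' % n + 1
      have h5 : p % n = p' % n + 1 := by
        have h6 : p % n % n = (p' % n + 1) % n := h4
        rwa [Nat.mod_eq_of_lt hr, Nat.mod_eq_of_lt h] at h6
      -- then p' - p = n - 1, so F = n, so block is aligned
      have hFn : F = n := by omega
      obtain ⟨c, hc0⟩ := halign hFn
      have hqc : p / n = c := by
        apply Nat.div_eq_of_lt_le
        · rw [hc0] at h1; rw [Nat.mul_comm] at h1; exact h1
        · rw [hc0, hFn] at h2
          have : (c + 1) * n = n * c + n := by ring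
          omega
      have hqc' : p' / n = c := by
        apply Nat.div_eq_of_lt_le
        · rw [hc0] at h1'; rw [Nat.mul_comm] at h1'; exact h1'
        · rw [hc0, hFn] at h2'
          have : (c + 1) * n = n * c + n := by ring
          omega
      omega
    · -- p' % n = n - 1, p % n = 0 : impossible since p' - p would be ≥ n + 1
      have h5 : p' % n = n - 1 := by omega
      have h6 : p % n = 0 := by
        have h7 : p % n % n = (p' % n + 1) % n := h4
        have h8 : p' % n + 1 = n := by omega
        rw [Nat.mod_eq_of_lt hr, h8, Nat.mod_self] at h7
        exact h7
      omega

lemma cols_ne {n B F p p' : ℕ} (hn : 0 < n) (hF : F ≤ n) (halign : F = n → n ∣ B)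
    (h1 : B ≤ p) (h2 : p < B + F) (h1' : B ≤ p') (h2' : p' < B + F)
    (hrne : p % n ≠ p' % n) :
    (p % n + p / n) % n ≠ (p' % n + p' / n) % n := by
  rcases Nat.lt_trichotomy p p' with h | h | h
  · exact cols_ne_aux hn hF halign h1 h2 h1' h2' hrne h
  · rw [h] at hrne; exact absurd rfl hrne
  · exact fun hc => cols_ne_aux hn hF halign h1' h2' h1 h2 (Ne.symm hrne) h hc.symm

end RhoAux


/-- For every `ρ = (ρ_1, …, ρ_k)` with `1 ≤ ρ_ℓ ≤ n ≤ k` and `∑ ρ_ℓ = n²`,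
there exists a `ρ`-latin square of order `n`. -/
theorem stmt1 (n k : ℕ) (ρ : Fin k → ℕ) (hρ1 : ∀ ℓ, 1 ≤ ρ ℓ) (hρn : ∀ ℓ, ρ ℓ ≤ n)
    (hnk : n ≤ k) (hsum : ∑ ℓ, ρ ℓ = n ^ 2) :
    ∃ S : Fin n → Fin n → Fin k, rhoLatinSquare ρ S := by
  rcases Nat.eq_zero_or_pos n with rfl | hn
  · refine ⟨fun i => i.elim0, ⟨fun i => i.elim0, fun j a => a.elim0⟩, fun ℓ => ?_⟩
    exfalso
    have h0 : ρ ℓ = 0 := Finset.sum_eq_zero_iff.mp (by simpa using hsum) ℓ (Finset.mem_univ ℓ)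
    have := hρ1 ℓ
    omega
  · set σ := Tuple.sort ρ with hσ
    set f : ℕ → ℕ := fun m => if h : m < k then ρ (σ ⟨m, h⟩) else 0 with hf
    have hf_eval : ∀ (m : ℕ) (h : m < k), f m = ρ (σ ⟨m, h⟩) := by
      intro m h
      simp only [hf, dif_pos h]
    have hf_le : ∀ m, f m ≤ n := by
      intro m
      by_cases h : m < k
      · rw [hf_eval m h]; exact hρn _
      · simp only [hf, dif_neg h]; omega
    have hsum' : RhoAux.PS f k = n ^ 2 := by
      have h1 : RhoAux.PS f k = ∑ i : Fin k, ρ (σ i) := by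
        rw [RhoAux.PS, ← Fin.sum_univ_eq_sum_range]
        refine Finset.sum_congr rfl fun i _ => ?_
        rw [hf_eval i.val i.isLt, Fin.eta]
      rw [h1, Equiv.sum_comp σ ρ, hsum]
    have hmono : ∀ a b : ℕ, a ≤ b → b < k → f a ≤ f b := by
      intro a b hab hb
      have ha : a < k := lt_of_le_of_lt hab hb
      rw [hf_eval a ha, hf_eval b hb]
      exact Tuple.monotone_sort ρ (show (⟨a, ha⟩ : Fin k) ≤ ⟨b, hb⟩ from hab)
    have halign : ∀ m, m < k → f m = n → n ∣ RhoAux.PS f m := by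
      intro m hm hfm
      have hconst : ∀ t ∈ Finset.Ico m k, f t = n := by
        intro t ht
        rw [Finset.mem_Ico] at ht
        have h1 : f m ≤ f t := hmono m t ht.1 ht.2
        have h2 : f t ≤ n := hf_le t
        omega
      have hsplit : RhoAux.PS f m + ∑ t ∈ Finset.Ico m k, f t = RhoAux.PS f k := by
        rw [RhoAux.PS, RhoAux.PS, Finset.range_eq_Ico, Finset.range_eq_Ico]
        exact Finset.sum_Ico_consecutive f (Nat.zero_le m) (le_of_lt hm)
      rw [Finset.sum_congr rfl hconst, Finset.sum_const, Nat.card_Ico, smul_eq_mul,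
        hsum'] at hsplit
      have hd1 : n ∣ n ^ 2 := ⟨n, by ring⟩
      have hd2 : n ∣ (k - m) * n := Dvd.intro_left _ rfl
      have h3 : RhoAux.PS f m = n ^ 2 - (k - m) * n := by omega
      rw [h3]
      exact Nat.dvd_sub hd1 hd2
    set pos' : Fin n → Fin n → ℕ := fun i j => ((j.val + n - i.val) % n) * n + i.val
      with hpos
    have hposlt : ∀ i j : Fin n, pos' i j < n ^ 2 :=
      fun i j => RhoAux.posIdx_lt i.isLt j.isLt
    have hposPS : ∀ i j : Fin n, pos' i j < RhoAux.PS f k := by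
      intro i j
      rw [hsum']
      exact hposlt i j
    have hglt : ∀ i j : Fin n, RhoAux.gIdx f (pos' i j) < k :=
      fun i j => RhoAux.gIdx_lt (hposPS i j)
    have hrow : ∀ i j : Fin n, (pos' i j) % n = i.val :=
      fun i j => RhoAux.posIdx_mod i.isLt _
    have hdiv : ∀ i j : Fin n, (pos' i j) / n = (j.val + n - i.val) % n :=
      fun i j => RhoAux.posIdx_div hn i.isLt _
    have hcol : ∀ i j : Fin n, ((pos' i j) % n + (pos' i j) / n) % n = j.val := by
      intro i j
      rw [hrow i j, hdiv i j]
      exact RhoAux.col_eq i.isLt j.isLt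
    have hkey : ∀ p p', p < RhoAux.PS f k → p' < RhoAux.PS f k →
        RhoAux.gIdx f p = RhoAux.gIdx f p' → p ≠ p' →
        p % n ≠ p' % n ∧ (p % n + p / n) % n ≠ (p' % n + p' / n) % n := by
      intro p p' hp hp' hg hne
      have b1 : RhoAux.PS f (RhoAux.gIdx f p) ≤ p := RhoAux.PS_gIdx_le
      have b2 : p < RhoAux.PS f (RhoAux.gIdx f p) + f (RhoAux.gIdx f p) := by
        have := RhoAux.lt_PS_gIdx hp
        rwa [RhoAux.PS_succ] at this
      have b1' : RhoAux.PS f (RhoAux.gIdx f p) ≤ p' := by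
        rw [hg]
        exact RhoAux.PS_gIdx_le
      have b2' : p' < RhoAux.PS f (RhoAux.gIdx f p) + f (RhoAux.gIdx f p) := by
        rw [hg]
        have := RhoAux.lt_PS_gIdx hp'
        rwa [RhoAux.PS_succ] at this
      have hal : f (RhoAux.gIdx f p) = n → n ∣ RhoAux.PS f (RhoAux.gIdx f p) :=
        halign _ (RhoAux.gIdx_lt hp)
      have hrne := RhoAux.rows_ne hn (hf_le _) b1 b2 b1' b2' hne
      exact ⟨hrne, RhoAux.cols_ne hn (hf_le _) hal b1 b2 b1' b2' hrne⟩
    refine ⟨fun i j => σ ⟨RhoAux.gIdx f (pos' i j), hglt i j⟩, ⟨?_, ?_⟩, ?_⟩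
    · -- rows
      intro i j j' hjj
      have hg : RhoAux.gIdx f (pos' i j) = RhoAux.gIdx f (pos' i j') :=
        congrArg Fin.val (σ.injective hjj)
      by_contra hne
      have hpne : pos' i j ≠ pos' i j' := by
        intro hpp
        exact hne (Fin.ext (by rw [← hcol i j, ← hcol i j', hpp]))
      have hk2 := hkey _ _ (hposPS i j) (hposPS i j') hg hpne
      exact hk2.1 (by rw [hrow i j, hrow i j'])
    · -- columns
      intro j i i' hii
      have hg : RhoAux.gIdx f (pos' i j) = RhoAux.gIdx f (pos' i' j) :=
        congrArg Fin.val (σ.injective hii)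
      by_contra hne
      have hpne : pos' i j ≠ pos' i' j := by
        intro hpp
        exact hne (Fin.ext (by rw [← hrow i j, ← hrow i' j, hpp]))
      have hk2 := hkey _ _ (hposPS i j) (hposPS i' j) hg hpne
      exact hk2.2 (by rw [hcol i j, hcol i' j])
    · -- symbol counts
      intro ℓ
      have hval : ∀ i j : Fin n,
          ((σ ⟨RhoAux.gIdx f (pos' i j), hglt i j⟩ : Fin k) = ℓ
            ↔ RhoAux.gIdx f (pos' i j) = (σ.symm ℓ).val) := by
        intro i j
        rw [Equiv.apply_eq_iff_eq_symm_apply, Fin.ext_iff]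
      have hcard : symCount (fun i j => σ ⟨RhoAux.gIdx f (pos' i j), hglt i j⟩) ℓ
          = ((Finset.range (n ^ 2)).filter
              (fun p => RhoAux.gIdx f p = (σ.symm ℓ).val)).card := by
        rw [symCount]
        apply Finset.card_bij' (i := fun q _ => pos' q.1 q.2)
          (j := fun p _ => ((⟨p % n, Nat.mod_lt _ hn⟩ : Fin n),
            (⟨(p % n + p / n) % n, Nat.mod_lt _ hn⟩ : Fin n)))
        · intro q hq
          rw [Finset.mem_filter] at hq ⊢
          exact ⟨Finset.mem_range.mpr (hposlt q.1 q.2), (hval q.1 q.2).mp hq.2⟩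
        · intro p hp
          rw [Finset.mem_filter] at hp ⊢
          refine ⟨Finset.mem_univ _, ?_⟩
          have hpc : pos' ⟨p % n, Nat.mod_lt _ hn⟩ ⟨(p % n + p / n) % n, Nat.mod_lt _ hn⟩
              = p := RhoAux.pos_cellOf hn (Finset.mem_range.mp hp.1)
          rw [hval, hpc]
          exact hp.2
        · intro q hq
          exact Prod.ext (Fin.ext (hrow q.1 q.2)) (Fin.ext (hcol q.1 q.2))
        · intro p hp
          exact RhoAux.pos_cellOf hn (Finset.mem_range.mp (Finset.mem_filter.mp hp).1)
      rw [hcard, ← hsum', RhoAux.count_gIdx (σ.symm ℓ).isLt,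
        hf_eval _ (σ.symm ℓ).isLt, Fin.eta, Equiv.apply_symm_apply]
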